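/- Operator norm of the Taylor projection remainder (Lemma 6.5): Let m ≥ 0 and d ∈ ℕ with d < m − 1/2, and let χ_0 ∈ C_c^∞(ℝ). Then there exists C > 0 such that for all 0 < ħ ≤ 1 and all φ ∈ C_c^∞(ℝ): ‖ (χ_0 φ) − ∑_{k=0}^{d} Π_k φ ‖_{H^{−m}_ħ} ≤ C ħ^{−d−1/2} ‖φ‖_{H^{−m}_ħ}. -/

import Mathlib

open MeasureTheory
open scoped ENNReal

set_option maxHeartbeats 1000000

/-- The unitary semiclassical Fourier transform
`(F_ħ φ)(ξ) = (2πħ)^{-1/2} ∫ e^{-ixξ/ħ} φ(x) dx`. -/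
noncomputable def semiFourier (h : ℝ) (f : ℝ → ℂ) (ξ : ℝ) : ℂ :=
  ((Real.sqrt (2 * Real.pi * h) : ℝ) : ℂ)⁻¹ *
    ∫ x : ℝ, Complex.exp (-(Complex.I * x * ξ) / h) * f x

/-- The semiclassical Sobolev norm `‖φ‖_{H^{-m}_ħ} = ‖⟨ξ⟩^{-m} F_ħ φ‖_{L²}`. -/
noncomputable def sobolevNorm (h m : ℝ) (f : ℝ → ℂ) : ℝ≥0∞ :=
  eLpNorm (fun ξ : ℝ => (((1 + ξ ^ 2) ^ (-(m / 2)) : ℝ) : ℂ) * semiFourier h f ξ) 2 volume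

/-- The ħ-Fourier transform of the rank-one term
`Π_k φ = (1/k!) (∫ x^k χ₀(x) φ(x) dx) · δ^{(k)}`, namely
`ξ ↦ (1/k!) (∫ x^k χ₀ φ) (2πħ)^{-1/2} (−iξ/ħ)^k`. -/
noncomputable def PiFT (χ₀ : ℝ → ℝ) (φ : ℝ → ℂ) (k : ℕ) (h ξ : ℝ) : ℂ :=
  ((k.factorial : ℂ))⁻¹ * (∫ x : ℝ, (x : ℂ) ^ k * (χ₀ x : ℂ) * φ x) *
    ((Real.sqrt (2 * Real.pi * h) : ℝ) : ℂ)⁻¹ * (-(Complex.I) * ξ / h) ^ k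

lemma ofReal_norm_eq_coe_nnnorm {E : Type*} [SeminormedAddCommGroup E] (a : E) :
    ENNReal.ofReal ‖a‖ = ((‖a‖₊ : ℝ≥0∞)) :=
  ENNReal.ofReal_eq_coe_nnreal _

namespace TaylorAux

open Real Complex MeasureTheory FourierTransform Finset
open scoped NNReal

/-! ### Schwartz functions from smooth compactly supported functions -/

noncomputable def toSchwartz (f : ℝ → ℂ) (hf : ContDiff ℝ (⊤ : ℕ∞) f)
    (hc : HasCompactSupport f) : SchwartzMap ℝ ℂ where
  toFun := f
  smooth' := hf
  decay' := by
    intro k n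
    have hgc : Continuous fun x : ℝ => ‖x‖ ^ k * ‖iteratedFDeriv ℝ n f x‖ :=
      (continuous_norm.pow k).mul (hf.continuous_iteratedFDeriv (mod_cast le_top)).norm
    have hgs : HasCompactSupport fun x : ℝ => ‖x‖ ^ k * ‖iteratedFDeriv ℝ n f x‖ :=
      HasCompactSupport.mul_left ((hc.iteratedFDeriv n).norm)
    obtain ⟨x₀, hx₀⟩ := hgc.exists_forall_ge_of_hasCompactSupport hgs
    exact ⟨_, hx₀⟩

@[simp] lemma toSchwartz_coe (f : ℝ → ℂ) (hf : ContDiff ℝ (⊤ : ℕ∞) f)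
    (hc : HasCompactSupport f) : ⇑(toSchwartz f hf hc) = f := rfl

/-! ### Basic facts about `semiFourier` -/

lemma semiFourier_eq {h : ℝ} (hh : 0 < h) (f : ℝ → ℂ) (ξ : ℝ) :
    semiFourier h f ξ
      = ((Real.sqrt (2 * π * h) : ℝ) : ℂ)⁻¹ * FourierTransform.fourier f (ξ / (2 * π * h)) := by
  rw [semiFourier, Real.fourier_real_eq_integral_exp_smul]
  congr 1
  refine integral_congr_ae (Filter.Eventually.of_forall fun x => ?_)
  show Complex.exp (-(Complex.I * x * ξ) / h) * f x
      = Complex.exp ((-2 * π * x * (ξ / (2 * π * h)) : ℝ) * Complex.I) • f x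
  rw [smul_eq_mul]
  congr 1
  have hre : (-2 * π * x * (ξ / (2 * π * h)) : ℝ) = -(x * ξ / h) := by
    have hπ : (π : ℝ) ≠ 0 := Real.pi_ne_zero
    field_simp
  rw [hre]
  push_cast
  ring

lemma continuous_semiFourier {h : ℝ} (hh : 0 < h) (Ψ : SchwartzMap ℝ ℂ) :
    Continuous (semiFourier h ⇑Ψ) := by
  have : semiFourier h ⇑Ψ
      = fun ξ => ((Real.sqrt (2 * π * h) : ℝ) : ℂ)⁻¹
          * (SchwartzMap.fourierTransformCLM ℂ Ψ) (ξ / (2 * π * h)) := by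
    funext ξ
    rw [semiFourier_eq hh, SchwartzMap.fourierTransformCLM_apply]
    rfl
  rw [this]
  exact continuous_const.mul
    ((SchwartzMap.fourierTransformCLM ℂ Ψ).continuous.comp (continuous_id.div_const _))

/-! ### The pairing (multiplication) formula -/

lemma pairing_fourier (Φ : SchwartzMap ℝ ℂ) {g : ℝ → ℂ} (hg : Integrable g) :
    ∫ x : ℝ, g x * Φ x = ∫ w : ℝ, FourierTransform.fourier (⇑Φ) w * FourierTransform.fourier g (-w) := by
  have hΦi : Integrable (⇑Φ) := Φ.integrable
  have hFΦs : ⇑(SchwartzMap.fourierTransformCLM ℂ Φ) = FourierTransform.fourier (⇑Φ) :=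
    rfl
  have hFΦ : Integrable (FourierTransform.fourier (⇑Φ)) := by
    rw [← hFΦs]; exact (SchwartzMap.fourierTransformCLM ℂ Φ).integrable
  have hψi : Integrable (fun x : ℝ => FourierTransform.fourier (⇑Φ) (-x)) := hFΦ.comp_neg
  have hinv : FourierTransform.fourier (fun x : ℝ => FourierTransform.fourier (⇑Φ) (-x)) = ⇑Φ := by
    rw [← Real.fourierInv_eq_fourier_comp_neg]
    exact Φ.continuous.fourierInv_fourier_eq hΦi hFΦ
  have hL : Continuous fun p : ℝ × ℝ => (innerₗ ℝ) p.1 p.2 := continuous_inner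
  have flip := VectorFourier.integral_fourierIntegral_smul_eq_flip
    (e := Real.fourierChar) (L := innerₗ ℝ) (μ := volume) (ν := volume)
    Real.continuous_fourierChar hL hψi hg
  have hflipL : (innerₗ ℝ).flip = innerₗ ℝ := by
    apply LinearMap.ext; intro x; apply LinearMap.ext; intro y
    simp [real_inner_comm]
  rw [hflipL] at flip
  have e1 : ∀ (f : ℝ → ℂ) (w : ℝ),
      VectorFourier.fourierIntegral Real.fourierChar volume (innerₗ ℝ) f w
        = FourierTransform.fourier f w := fun _ _ => rfl
  calc ∫ x : ℝ, g x * Φ x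
      = ∫ ξ : ℝ, FourierTransform.fourier (fun x : ℝ => FourierTransform.fourier (⇑Φ) (-x)) ξ • g ξ := by
        rw [hinv]
        refine integral_congr_ae (Filter.Eventually.of_forall fun x => ?_)
        show g x * Φ x = Φ x • g x
        rw [smul_eq_mul, mul_comm]
    _ = ∫ x : ℝ, (fun x : ℝ => FourierTransform.fourier (⇑Φ) (-x)) x • FourierTransform.fourier g x := by
        simp only [← e1]
        exact flip
    _ = ∫ x : ℝ, (fun w : ℝ => FourierTransform.fourier (⇑Φ) w * FourierTransform.fourier g (-w)) (-x) := by
        refine integral_congr_ae (Filter.Eventually.of_forall fun x => ?_)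
        show FourierTransform.fourier (⇑Φ) (-x) • FourierTransform.fourier g x
            = FourierTransform.fourier (⇑Φ) (- x) * FourierTransform.fourier g (- - x)
        rw [smul_eq_mul, neg_neg]
    _ = ∫ w : ℝ, FourierTransform.fourier (⇑Φ) w * FourierTransform.fourier g (-w) :=
        integral_neg_eq_self (fun w : ℝ => FourierTransform.fourier (⇑Φ) w
          * FourierTransform.fourier g (-w)) volume

lemma pairing_semi {h : ℝ} (hh : 0 < h) (Φ : SchwartzMap ℝ ℂ) {g : ℝ → ℂ}
    (hg : Integrable g) :
    ∫ x : ℝ, g x * Φ x = ∫ η : ℝ, semiFourier h g (-η) * semiFourier h (⇑Φ) η := by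
  have hp : (0 : ℝ) < 2 * π * h := by positivity
  have hs : (0 : ℝ) < Real.sqrt (2 * π * h) := Real.sqrt_pos.2 hp
  set s : ℝ := Real.sqrt (2 * π * h) with hsdef
  have hss : s * s = 2 * π * h := Real.mul_self_sqrt hp.le
  have key : ∀ η : ℝ, semiFourier h g (-η) * semiFourier h (⇑Φ) η
      = ((s : ℂ))⁻¹ * ((s : ℂ))⁻¹ *
          ((fun w : ℝ => FourierTransform.fourier g (-w) * FourierTransform.fourier (⇑Φ) w)
            ((2 * π * h)⁻¹ * η)) := by
    intro η
    rw [semiFourier_eq hh, semiFourier_eq hh]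
    have : -η / (2 * π * h) = -((2 * π * h)⁻¹ * η) := by ring
    rw [this]
    have : η / (2 * π * h) = (2 * π * h)⁻¹ * η := by ring
    rw [this]
    ring
  rw [integral_congr_ae (Filter.Eventually.of_forall key), integral_const_mul,
    Measure.integral_comp_mul_left
      (fun w : ℝ => FourierTransform.fourier g (-w) * FourierTransform.fourier (⇑Φ) w) (2 * π * h)⁻¹]
  have habs : |((2 * π * h)⁻¹)⁻¹| = ((s : ℝ) * s) := by
    rw [inv_inv, abs_of_pos hp, hss]
  rw [habs, pairing_fourier Φ hg, Complex.real_smul]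
  have hcomm : ∫ w : ℝ, FourierTransform.fourier (⇑Φ) w * FourierTransform.fourier g (-w)
      = ∫ w : ℝ, FourierTransform.fourier g (-w) * FourierTransform.fourier (⇑Φ) w :=
    integral_congr_ae (Filter.Eventually.of_forall fun w => mul_comm _ _)
  rw [hcomm, ← mul_assoc]
  have hsne : (s : ℂ) ≠ 0 := by
    simp only [ne_eq, Complex.ofReal_eq_zero]; exact hs.ne'
  have hone : ((s : ℂ))⁻¹ * ((s : ℂ))⁻¹ * ((s * s : ℝ) : ℂ) = 1 := by
    push_cast
    field_simp
  rw [hone, one_mul]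

/-! ### Convolution form of `semiFourier (χ φ)` -/

lemma semiFourier_conv {h : ℝ} (hh : 0 < h) {χ : ℝ → ℂ} (hχcont : Continuous χ)
    (hχsupp : HasCompactSupport χ) (Φ : SchwartzMap ℝ ℂ) (ξ : ℝ) :
    semiFourier h (fun x => χ x * Φ x) ξ
      = ((Real.sqrt (2 * π * h) : ℝ) : ℂ)⁻¹ *
          ∫ η : ℝ, semiFourier h χ (ξ - η) * semiFourier h (⇑Φ) η := by
  have hgsupp : HasCompactSupport (fun x : ℝ => Complex.exp (-(Complex.I * x * ξ) / h) * χ x) := by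
    apply HasCompactSupport.mono hχsupp
    intro x hx
    simp only [Function.mem_support] at hx ⊢
    intro h0
    exact hx (by rw [h0, mul_zero])
  have hgint : Integrable (fun x : ℝ => Complex.exp (-(Complex.I * x * ξ) / h) * χ x) := by
    refine Continuous.integrable_of_hasCompactSupport ?_ hgsupp
    have hc1 : Continuous fun x : ℝ => -(Complex.I * x * ξ) / h :=
      (((continuous_const.mul Complex.continuous_ofReal).mul continuous_const).neg).div_const _
    exact (Complex.continuous_exp.comp hc1).mul hχcont
  have step1 : semiFourier h (fun x => χ x * Φ x) ξ
      = ((Real.sqrt (2 * π * h) : ℝ) : ℂ)⁻¹ *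
          ∫ x : ℝ, (Complex.exp (-(Complex.I * x * ξ) / h) * χ x) * Φ x := by
    rw [semiFourier]
    congr 1
    refine integral_congr_ae (Filter.Eventually.of_forall fun x => ?_)
    ring
  rw [step1, pairing_semi hh Φ hgint]
  have hmod : ∀ η : ℝ, semiFourier h
      (fun x : ℝ => Complex.exp (-(Complex.I * x * ξ) / h) * χ x) (-η)
        = semiFourier h χ (ξ - η) := by
    intro η
    simp only [semiFourier]
    congr 1
    refine integral_congr_ae (Filter.Eventually.of_forall fun x => ?_)
    beta_reduce
    rw [← mul_assoc, ← Complex.exp_add]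
    congr 2
    have h0 : (h : ℂ) ≠ 0 := by exact_mod_cast hh.ne'
    push_cast
    field_simp
    ring
  congr 1
  refine integral_congr_ae (Filter.Eventually.of_forall fun η => ?_)
  beta_reduce
  rw [hmod η]

/-! ### Scaling for lintegrals -/

lemma lintegral_comp_mul_left' (f : ℝ → ℝ≥0∞) (hf : Measurable f) {a : ℝ} (ha : a ≠ 0) :
    ∫⁻ x : ℝ, f (a * x) = ENNReal.ofReal |a⁻¹| * ∫⁻ x, f x := by
  calc ∫⁻ x : ℝ, f (a * x)
      = ∫⁻ y, f y ∂(Measure.map (fun x : ℝ => a * x) volume) :=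
        (lintegral_map hf (measurable_const_mul a)).symm
    _ = ENNReal.ofReal |a⁻¹| * ∫⁻ x, f x := by
        rw [Real.map_volume_mul_left ha, lintegral_smul_measure, smul_eq_mul]

lemma lintegral_comp_neg' (f : ℝ → ℝ≥0∞) (hf : Measurable f) :
    ∫⁻ x : ℝ, f (-x) = ∫⁻ x, f x :=
  (Measure.measurePreserving_neg (volume : Measure ℝ)).lintegral_comp hf

/-! ### Peetre's inequality -/

lemma peetre {m : ℝ} (hm : 0 ≤ m) (ξ η : ℝ) :
    (1 + ξ ^ 2) ^ (-(m / 2)) * (1 + η ^ 2) ^ (m / 2)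
      ≤ 2 ^ (m / 2) * (1 + (ξ - η) ^ 2) ^ (m / 2) := by
  have h1 : (0 : ℝ) < 1 + ξ ^ 2 := by positivity
  have h2 : (0 : ℝ) < 1 + η ^ 2 := by positivity
  have h3 : (0 : ℝ) < 1 + (ξ - η) ^ 2 := by positivity
  have key : (1 + η ^ 2) ≤ 2 * (1 + (ξ - η) ^ 2) * (1 + ξ ^ 2) := by
    nlinarith [sq_nonneg (ξ + (ξ - η)), sq_nonneg (ξ * (ξ - η)), sq_nonneg ξ, sq_nonneg (ξ - η)]
  have key2 : (1 + η ^ 2) ^ (m / 2) ≤ (2 * (1 + (ξ - η) ^ 2) * (1 + ξ ^ 2)) ^ (m / 2) :=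
    Real.rpow_le_rpow h2.le key (by positivity)
  have expand : (2 * (1 + (ξ - η) ^ 2) * (1 + ξ ^ 2)) ^ (m / 2)
      = 2 ^ (m / 2) * (1 + (ξ - η) ^ 2) ^ (m / 2) * (1 + ξ ^ 2) ^ (m / 2) := by
    rw [Real.mul_rpow (by positivity) h1.le, Real.mul_rpow (by positivity) h3.le]
  rw [Real.rpow_neg h1.le]
  rw [inv_mul_le_iff₀ (Real.rpow_pos_of_pos h1 _)]
  calc (1 + η ^ 2) ^ (m / 2)
      ≤ 2 ^ (m / 2) * (1 + (ξ - η) ^ 2) ^ (m / 2) * (1 + ξ ^ 2) ^ (m / 2) := by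
        rw [← expand]; exact key2
    _ = (1 + ξ ^ 2) ^ (m / 2) * (2 ^ (m / 2) * (1 + (ξ - η) ^ 2) ^ (m / 2)) := by ring

/-! ### ENNReal Cauchy–Schwarz and Young -/

lemma lintegral_CS {f g : ℝ → ℝ≥0∞} (hf : AEMeasurable f) (hg : AEMeasurable g) :
    ∫⁻ x, f x * g x
      ≤ (∫⁻ x, f x ^ (2 : ℝ)) ^ (1 / 2 : ℝ) * (∫⁻ x, g x ^ (2 : ℝ)) ^ (1 / 2 : ℝ) := by
  have hconj : Real.HolderConjugate 2 2 := Real.HolderConjugate.two_two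
  simpa [Pi.mul_apply] using ENNReal.lintegral_mul_le_Lp_mul_Lq volume hconj hf hg

lemma young {K V : ℝ → ℝ≥0∞} (hK : Measurable K) (hV : Measurable V) :
    ∫⁻ ξ : ℝ, (∫⁻ η : ℝ, K (ξ - η) * V η) ^ (2 : ℝ)
      ≤ (∫⁻ ρ, K ρ) ^ (2 : ℝ) * ∫⁻ η, (V η) ^ (2 : ℝ) := by
  have hV2 : Measurable fun η => (V η) ^ (2 : ℝ) := hV.pow_const _
  have step1 : ∀ ξ : ℝ, (∫⁻ η, K (ξ - η) * V η) ^ (2 : ℝ)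
      ≤ (∫⁻ ρ, K ρ) * ∫⁻ η, K (ξ - η) * (V η) ^ (2 : ℝ) := by
    intro ξ
    have hKξ : Measurable fun η : ℝ => K (ξ - η) :=
      hK.comp (measurable_const.sub measurable_id)
    have hCS := lintegral_CS (f := fun η => (K (ξ - η)) ^ (1 / 2 : ℝ))
      (g := fun η => (K (ξ - η)) ^ (1 / 2 : ℝ) * V η)
      (hKξ.pow_const _).aemeasurable ((hKξ.pow_const _).mul hV).aemeasurable
    beta_reduce at hCS
    have hmul : ∀ η : ℝ, (K (ξ - η)) ^ (1 / 2 : ℝ) * ((K (ξ - η)) ^ (1 / 2 : ℝ) * V η)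
        = K (ξ - η) * V η := by
      intro η
      rw [← mul_assoc, ← ENNReal.rpow_add_of_nonneg _ _ (by norm_num) (by norm_num)]
      norm_num
    rw [lintegral_congr hmul] at hCS
    have hsq1 : ∀ η : ℝ, ((K (ξ - η)) ^ (1 / 2 : ℝ)) ^ (2 : ℝ) = K (ξ - η) := by
      intro η; rw [← ENNReal.rpow_mul]; norm_num
    have hsq2 : ∀ η : ℝ, ((K (ξ - η)) ^ (1 / 2 : ℝ) * V η) ^ (2 : ℝ)
        = K (ξ - η) * (V η) ^ (2 : ℝ) := by
      intro η
      rw [ENNReal.mul_rpow_of_nonneg _ _ (by norm_num), ← ENNReal.rpow_mul]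
      norm_num
    rw [lintegral_congr hsq1, lintegral_congr hsq2] at hCS
    have htrans : ∫⁻ η, K (ξ - η) = ∫⁻ ρ, K ρ :=
      (Measure.measurePreserving_sub_left (volume : Measure ℝ) ξ).lintegral_comp hK
    rw [htrans] at hCS
    calc (∫⁻ η, K (ξ - η) * V η) ^ (2 : ℝ)
        ≤ ((∫⁻ ρ, K ρ) ^ (1 / 2 : ℝ) *
            (∫⁻ η, K (ξ - η) * (V η) ^ (2 : ℝ)) ^ (1 / 2 : ℝ)) ^ (2 : ℝ) :=
          ENNReal.rpow_le_rpow hCS (by norm_num)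
      _ = (∫⁻ ρ, K ρ) * ∫⁻ η, K (ξ - η) * (V η) ^ (2 : ℝ) := by
          rw [ENNReal.mul_rpow_of_nonneg _ _ (by norm_num), ← ENNReal.rpow_mul,
            ← ENNReal.rpow_mul]
          norm_num
  have hmeas2 : Measurable fun ξ : ℝ => ∫⁻ η, K (ξ - η) * (V η) ^ (2 : ℝ) := by
    have : Measurable (Function.uncurry fun ξ η : ℝ => K (ξ - η) * (V η) ^ (2 : ℝ)) :=
      (hK.comp (measurable_fst.sub measurable_snd)).mul (hV2.comp measurable_snd)
    exact this.lintegral_prod_right'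
  calc ∫⁻ ξ : ℝ, (∫⁻ η : ℝ, K (ξ - η) * V η) ^ (2 : ℝ)
      ≤ ∫⁻ ξ : ℝ, (∫⁻ ρ, K ρ) * ∫⁻ η, K (ξ - η) * (V η) ^ (2 : ℝ) :=
        lintegral_mono step1
    _ = (∫⁻ ρ, K ρ) * ∫⁻ ξ : ℝ, ∫⁻ η, K (ξ - η) * (V η) ^ (2 : ℝ) :=
        lintegral_const_mul _ hmeas2
    _ = (∫⁻ ρ, K ρ) * ∫⁻ η, ∫⁻ ξ : ℝ, K (ξ - η) * (V η) ^ (2 : ℝ) := by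
        rw [lintegral_lintegral_swap]
        exact ((hK.comp (measurable_fst.sub measurable_snd)).mul
          (hV2.comp measurable_snd)).aemeasurable
    _ = (∫⁻ ρ, K ρ) * ∫⁻ η, (V η) ^ (2 : ℝ) * ∫⁻ ξ : ℝ, K (ξ - η) := by
        congr 1
        refine lintegral_congr fun η => ?_
        calc ∫⁻ ξ : ℝ, K (ξ - η) * V η ^ (2 : ℝ)
            = ∫⁻ ξ : ℝ, V η ^ (2 : ℝ) * K (ξ - η) :=
              lintegral_congr fun ξ => mul_comm _ _
          _ = V η ^ (2 : ℝ) * ∫⁻ ξ : ℝ, K (ξ - η) :=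
              lintegral_const_mul _ (hK.comp (measurable_id.sub measurable_const))
    _ = (∫⁻ ρ, K ρ) * ∫⁻ η, (V η) ^ (2 : ℝ) * ∫⁻ ρ, K ρ := by
        congr 1
        refine lintegral_congr fun η => ?_
        congr 1
        exact (measurePreserving_sub_right (volume : Measure ℝ) η).lintegral_comp hK
    _ = (∫⁻ ρ, K ρ) ^ (2 : ℝ) * ∫⁻ η, (V η) ^ (2 : ℝ) := by
        rw [lintegral_mul_const _ hV2]
        rw [show ((2:ℝ) = ((2:ℕ) : ℝ)) by norm_num, ENNReal.rpow_natCast]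
        ring

/-! ### Small helpers -/

lemma enn_ofReal {r : ℝ} (hr : 0 ≤ r) :
    ((‖((r : ℝ) : ℂ)‖₊ : ℝ≥0∞)) = ENNReal.ofReal r := by
  rw [← ofReal_norm_eq_coe_nnnorm, Complex.norm_real, Real.norm_eq_abs, _root_.abs_of_nonneg hr]

lemma weight_cancel (m t : ℝ) :
    ENNReal.ofReal ((1 + t ^ 2) ^ (m / 2)) * ENNReal.ofReal ((1 + t ^ 2) ^ (-(m / 2))) = 1 := by
  have ht : (0 : ℝ) < 1 + t ^ 2 := by positivity
  rw [← ENNReal.ofReal_mul (by positivity), ← Real.rpow_add ht]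
  simp

lemma enn_sq {a : ℝ} (ha : 0 ≤ a) :
    (ENNReal.ofReal a) ^ (2 : ℝ) = ENNReal.ofReal (a * a) := by
  rw [show ((2 : ℝ) = ((2 : ℕ) : ℝ)) by norm_num, ENNReal.rpow_natCast, sq,
    ENNReal.ofReal_mul ha]

lemma continuous_fourier {g : ℝ → ℂ} (hg : Integrable g) :
    Continuous (FourierTransform.fourier g) :=
  VectorFourier.fourierIntegral_continuous (L := innerₗ ℝ) Real.continuous_fourierChar continuous_inner hg

lemma eLpNorm_two (f : ℝ → ℂ) :
    eLpNorm f 2 volume = (∫⁻ ξ : ℝ, ((‖f ξ‖₊ : ℝ≥0∞)) ^ (2 : ℝ)) ^ (1 / 2 : ℝ) := by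
  rw [eLpNorm_eq_lintegral_rpow_enorm_toReal two_ne_zero ENNReal.ofNat_ne_top]
  norm_num
  rfl

lemma nnnorm_semiFourier {h : ℝ} (hh : 0 < h) (f : ℝ → ℂ) (t : ℝ) :
    ((‖semiFourier h f t‖₊ : ℝ≥0∞))
      = ENNReal.ofReal ((Real.sqrt (2 * π * h))⁻¹)
          * (‖FourierTransform.fourier f (t / (2 * π * h))‖₊ : ℝ≥0∞) := by
  rw [semiFourier_eq hh, nnnorm_mul, ENNReal.coe_mul, ← Complex.ofReal_inv,
    enn_ofReal (by positivity)]

lemma norm_split {mhalf : ℝ} (u : ℂ) (η : ℝ) :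
    ((‖(((1 + η ^ 2) ^ (-(mhalf / 2)) : ℝ) : ℂ) * u‖₊ : ℝ≥0∞))
      = ENNReal.ofReal ((1 + η ^ 2) ^ (-(mhalf / 2))) * (‖u‖₊ : ℝ≥0∞) := by
  rw [nnnorm_mul, ENNReal.coe_mul, enn_ofReal (by positivity)]

lemma norm_unsplit {mhalf : ℝ} (u : ℂ) (η : ℝ) :
    ((‖u‖₊ : ℝ≥0∞)) = ENNReal.ofReal ((1 + η ^ 2) ^ (mhalf / 2))
        * ((‖(((1 + η ^ 2) ^ (-(mhalf / 2)) : ℝ) : ℂ) * u‖₊ : ℝ≥0∞)) := by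
  rw [norm_split u η, ← mul_assoc, weight_cancel, one_mul]

/-! ### Finiteness of the constants -/

lemma Jfin {m : ℝ} {k : ℕ} (hkm : (k : ℝ) < m - 1 / 2) :
    (∫⁻ ξ : ℝ, ENNReal.ofReal ((1 + ξ ^ 2) ^ ((k : ℝ) - m))) ≠ ⊤ := by
  have h2 : ((Module.finrank ℝ ℝ : ℝ)) < 2 * (m - (k : ℝ)) := by
    simp only [Module.finrank_self, Nat.cast_one]
    linarith
  have hint := integrable_rpow_neg_one_add_norm_sq (E := ℝ) (μ := volume) h2
  have heq : (fun x : ℝ => ((1 : ℝ) + ‖x‖ ^ 2) ^ (-(2 * (m - (k : ℝ))) / 2))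
      = fun ξ : ℝ => (1 + ξ ^ 2) ^ ((k : ℝ) - m) := by
    funext x
    rw [Real.norm_eq_abs, _root_.sq_abs]
    congr 1
    ring
  rw [heq] at hint
  exact hint.lintegral_lt_top.ne

lemma weighted_fin (Ψ : SchwartzMap ℝ ℂ) {r : ℝ} (hr : 0 ≤ r) :
    ∫⁻ w : ℝ, ENNReal.ofReal ((1 + (2 * π * w) ^ 2) ^ r) * (‖Ψ w‖₊ : ℝ≥0∞) ≠ ⊤ := by
  obtain ⟨n, hn⟩ := exists_nat_ge r
  set c : ℝ := (1 + (2 * π) ^ 2) ^ n * 2 ^ n with hc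
  have hc0 : 0 ≤ c := by positivity
  have hgrow : ∀ w : ℝ, (1 + (2 * π * w) ^ 2) ^ r ≤ c * (1 + ‖w‖ ^ (2 * n)) := by
    intro w
    have h1 : (1 : ℝ) ≤ 1 + (2 * π * w) ^ 2 := by nlinarith [sq_nonneg (2 * π * w)]
    have h2 : (1 + (2 * π * w) ^ 2) ^ r ≤ (1 + (2 * π * w) ^ 2) ^ (n : ℝ) :=
      Real.rpow_le_rpow_of_exponent_le h1 hn
    rw [Real.rpow_natCast] at h2
    have h3 : (1 + (2 * π * w) ^ 2) ≤ (1 + (2 * π) ^ 2) * (1 + w ^ 2) := by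
      nlinarith [sq_nonneg (2 * π), sq_nonneg w, sq_nonneg (2 * π * w)]
    have h4 : (1 + (2 * π * w) ^ 2) ^ n ≤ ((1 + (2 * π) ^ 2) * (1 + w ^ 2)) ^ n :=
      pow_le_pow_left₀ (by positivity) h3 n
    have h5 : (1 + w ^ 2) ^ n ≤ 2 ^ n * (1 + ‖w‖ ^ (2 * n)) := by
      have hmax : (1 + w ^ 2) ≤ 2 * max 1 (w ^ 2) := by
        rcases le_total 1 (w ^ 2) with hcc | hcc
        · rw [max_eq_right hcc]; linarith
        · rw [max_eq_left hcc]; linarith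
      calc (1 + w ^ 2) ^ n ≤ (2 * max 1 (w ^ 2)) ^ n := pow_le_pow_left₀ (by positivity) hmax n
        _ = 2 ^ n * (max 1 (w ^ 2)) ^ n := mul_pow _ _ _
        _ ≤ 2 ^ n * (1 + ‖w‖ ^ (2 * n)) := by
            refine mul_le_mul_of_nonneg_left ?_ (by positivity)
            rcases le_total 1 (w ^ 2) with hcc | hcc
            · rw [max_eq_right hcc]
              have hwn : (w ^ 2) ^ n = ‖w‖ ^ (2 * n) := by
                rw [Real.norm_eq_abs, pow_mul, _root_.sq_abs]
              rw [hwn]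
              linarith [pow_nonneg (norm_nonneg w) (2 * n)]
            · rw [max_eq_left hcc, one_pow]
              have : (0:ℝ) ≤ ‖w‖ ^ (2 * n) := by positivity
              linarith
    calc (1 + (2 * π * w) ^ 2) ^ r
        ≤ ((1 + (2 * π) ^ 2) * (1 + w ^ 2)) ^ n := le_trans h2 h4
      _ = (1 + (2 * π) ^ 2) ^ n * (1 + w ^ 2) ^ n := mul_pow _ _ _
      _ ≤ (1 + (2 * π) ^ 2) ^ n * (2 ^ n * (1 + ‖w‖ ^ (2 * n))) :=
          mul_le_mul_of_nonneg_left h5 (by positivity)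
      _ = c * (1 + ‖w‖ ^ (2 * n)) := by rw [hc]; ring
  have hint : Integrable (fun w : ℝ => c * ((1 + ‖w‖ ^ (2 * n)) * ‖Ψ w‖)) := by
    have hbase : Integrable (fun w : ℝ => ‖Ψ w‖ + ‖w‖ ^ (2 * n) * ‖Ψ w‖) :=
      Ψ.integrable.norm.add (Ψ.integrable_pow_mul volume (2 * n))
    have heq : (fun w : ℝ => c * ((1 + ‖w‖ ^ (2 * n)) * ‖Ψ w‖))
        = fun w : ℝ => c * (‖Ψ w‖ + ‖w‖ ^ (2 * n) * ‖Ψ w‖) := by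
      funext w; ring
    rw [heq]
    exact hbase.const_mul c
  refine ne_of_lt (lt_of_le_of_lt (lintegral_mono fun w => ?_) hint.lintegral_lt_top)
  rw [← ofReal_norm_eq_coe_nnnorm, ← ENNReal.ofReal_mul (by positivity)]
  refine ENNReal.ofReal_le_ofReal ?_
  have := mul_le_mul_of_nonneg_right (hgrow w) (norm_nonneg (Ψ w))
  calc (1 + (2 * π * w) ^ 2) ^ r * ‖Ψ w‖
      ≤ c * (1 + ‖w‖ ^ (2 * n)) * ‖Ψ w‖ := this
    _ = c * ((1 + ‖w‖ ^ (2 * n)) * ‖Ψ w‖) := by ring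

lemma schwartz_bound (Ψ : SchwartzMap ℝ ℂ) : ∃ B : ℝ, 0 ≤ B ∧ ∀ w, ‖Ψ w‖ ≤ B := by
  obtain ⟨C, hC0, hC⟩ := Ψ.decay 0 0
  refine ⟨C, hC0.le, fun w => ?_⟩
  have := hC w
  simpa using this

lemma weighted_fin2 (Ψ : SchwartzMap ℝ ℂ) {r : ℝ} (hr : 0 ≤ r) :
    ∫⁻ w : ℝ, ENNReal.ofReal ((1 + (2 * π * w) ^ 2) ^ r) * ((‖Ψ w‖₊ : ℝ≥0∞)) ^ (2 : ℝ) ≠ ⊤ := by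
  obtain ⟨B, hB0, hB⟩ := schwartz_bound Ψ
  have hpt : ∀ w : ℝ, ENNReal.ofReal ((1 + (2 * π * w) ^ 2) ^ r) * ((‖Ψ w‖₊ : ℝ≥0∞)) ^ (2 : ℝ)
      ≤ ENNReal.ofReal B * (ENNReal.ofReal ((1 + (2 * π * w) ^ 2) ^ r) * (‖Ψ w‖₊ : ℝ≥0∞)) := by
    intro w
    have h1 : ((‖Ψ w‖₊ : ℝ≥0∞)) ^ (2 : ℝ) ≤ ENNReal.ofReal B * (‖Ψ w‖₊ : ℝ≥0∞) := by
      have h2 : ((‖Ψ w‖₊ : ℝ≥0∞)) ^ (2 : ℝ) = (‖Ψ w‖₊ : ℝ≥0∞) * (‖Ψ w‖₊ : ℝ≥0∞) := by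
        rw [show ((2:ℝ) = ((2:ℕ) : ℝ)) by norm_num, ENNReal.rpow_natCast]
        ring
      rw [h2]
      refine mul_le_mul_left ?_ _
      rw [← ofReal_norm_eq_coe_nnnorm]
      exact ENNReal.ofReal_le_ofReal (hB w)
    calc ENNReal.ofReal ((1 + (2 * π * w) ^ 2) ^ r) * ((‖Ψ w‖₊ : ℝ≥0∞)) ^ (2 : ℝ)
        ≤ ENNReal.ofReal ((1 + (2 * π * w) ^ 2) ^ r)
            * (ENNReal.ofReal B * (‖Ψ w‖₊ : ℝ≥0∞)) := mul_le_mul_right h1 _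
      _ = ENNReal.ofReal B * (ENNReal.ofReal ((1 + (2 * π * w) ^ 2) ^ r)
            * (‖Ψ w‖₊ : ℝ≥0∞)) := by ring
  refine ne_of_lt (lt_of_le_of_lt (lintegral_mono hpt) ?_)
  rw [lintegral_const_mul' _ _ ENNReal.ofReal_ne_top]
  exact ENNReal.mul_lt_top ENNReal.ofReal_lt_top (lt_of_le_of_ne le_top (weighted_fin Ψ hr))

/-! ### The scaling computation for weighted kernels -/

lemma scaled_kernel_le {m : ℝ} (hm : 0 ≤ m) {h : ℝ} (hh : 0 < h) (hh1 : h ≤ 1)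
    (F : ℝ → ℝ≥0∞) (hF : Measurable F) (r : ℝ) (hr : 0 ≤ r) :
    ∫⁻ ρ : ℝ, ENNReal.ofReal ((1 + ρ ^ 2) ^ r) * F (ρ / (2 * π * h))
      ≤ ENNReal.ofReal (2 * π * h) *
          ∫⁻ w : ℝ, ENNReal.ofReal ((1 + (2 * π * w) ^ 2) ^ r) * F w := by
  have hp : (0 : ℝ) < 2 * π * h := by positivity
  set p : ℝ := 2 * π * h with hpdef
  have hFn : Measurable fun w : ℝ => ENNReal.ofReal ((1 + (p * w) ^ 2) ^ r) * F w := by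
    refine Measurable.mul ?_ hF
    refine ENNReal.measurable_ofReal.comp ?_
    have : Continuous fun w : ℝ => (1 + (p * w) ^ 2) ^ r := by
      refine Continuous.rpow_const ?_ fun w => Or.inl (by positivity)
      exact continuous_const.add (((continuous_const.mul continuous_id).pow 2))
    exact this.measurable
  have key : ∀ ρ : ℝ, ENNReal.ofReal ((1 + ρ ^ 2) ^ r) * F (ρ / p)
      = (fun w : ℝ => ENNReal.ofReal ((1 + (p * w) ^ 2) ^ r) * F w) (p⁻¹ * ρ) := by
    intro ρ
    beta_reduce
    rw [mul_inv_cancel_left₀ hp.ne']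
    rw [div_eq_inv_mul]
  calc ∫⁻ ρ : ℝ, ENNReal.ofReal ((1 + ρ ^ 2) ^ r) * F (ρ / p)
      = ∫⁻ ρ : ℝ, (fun w : ℝ => ENNReal.ofReal ((1 + (p * w) ^ 2) ^ r) * F w) (p⁻¹ * ρ) :=
        lintegral_congr key
    _ = ENNReal.ofReal |p⁻¹⁻¹| * ∫⁻ w, ENNReal.ofReal ((1 + (p * w) ^ 2) ^ r) * F w :=
        lintegral_comp_mul_left' _ hFn (inv_ne_zero hp.ne')
    _ ≤ ENNReal.ofReal p * ∫⁻ w, ENNReal.ofReal ((1 + (2 * π * w) ^ 2) ^ r) * F w := by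
        rw [inv_inv, abs_of_pos hp]
        refine mul_le_mul_right (lintegral_mono fun w => mul_le_mul_left ?_ _) _
        refine ENNReal.ofReal_le_ofReal (Real.rpow_le_rpow (by positivity) ?_ hr)
        have : (p * w) ^ 2 ≤ (2 * π * w) ^ 2 := by
          have h1 : (p * w) ^ 2 = (2 * π * w) ^ 2 * h ^ 2 := by rw [hpdef]; ring
          have h2 : h ^ 2 ≤ 1 := by nlinarith
          nlinarith [sq_nonneg (2 * π * w)]
        linarith

/-! ### Main estimate for the multiplication term -/

lemma mainA {m : ℝ} (hm : 0 ≤ m) {h : ℝ} (hh : 0 < h) (hh1 : h ≤ 1)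
    {χ : ℝ → ℂ} (hχsm : ContDiff ℝ (⊤ : ℕ∞) χ) (hχc : HasCompactSupport χ)
    (φ : ℝ → ℂ) (hφsm : ContDiff ℝ (⊤ : ℕ∞) φ) (hφc : HasCompactSupport φ) :
    eLpNorm (fun ξ : ℝ => (((1 + ξ ^ 2) ^ (-(m / 2)) : ℝ) : ℂ) *
        semiFourier h (fun x => χ x * φ x) ξ) 2 volume
      ≤ ENNReal.ofReal (2 ^ (m / 2)) *
          (∫⁻ w : ℝ, ENNReal.ofReal ((1 + (2 * π * w) ^ 2) ^ (m / 2))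
            * (‖FourierTransform.fourier χ w‖₊ : ℝ≥0∞)) *
          eLpNorm (fun η : ℝ => (((1 + η ^ 2) ^ (-(m / 2)) : ℝ) : ℂ) *
            semiFourier h φ η) 2 volume := by
  have hp : (0 : ℝ) < 2 * π * h := by positivity
  set s : ℝ := Real.sqrt (2 * π * h) with hsdef
  have hs : 0 < s := Real.sqrt_pos.2 hp
  have hss : s * s = 2 * π * h := Real.mul_self_sqrt hp.le
  set Φ : SchwartzMap ℝ ℂ := toSchwartz φ hφsm hφc with hΦdef
  set Χ : SchwartzMap ℝ ℂ := toSchwartz χ hχsm hχc with hΧdef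
  have hχφ : ⇑Φ = φ := rfl
  have hsemiχ_cont : Continuous (semiFourier h χ) := continuous_semiFourier hh Χ
  have hsemiφ_cont : Continuous (semiFourier h φ) := continuous_semiFourier hh Φ
  set K : ℝ → ℝ≥0∞ := fun ρ =>
    ENNReal.ofReal (2 ^ (m / 2) * s⁻¹ * (1 + ρ ^ 2) ^ (m / 2))
      * (‖semiFourier h χ ρ‖₊ : ℝ≥0∞) with hKdef
  set V : ℝ → ℝ≥0∞ := fun η =>
    (‖(((1 + η ^ 2) ^ (-(m / 2)) : ℝ) : ℂ) * semiFourier h φ η‖₊ : ℝ≥0∞) with hVdef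
  have hwcont : ∀ r : ℝ, Continuous fun ρ : ℝ => (1 + ρ ^ 2) ^ r := by
    intro r
    refine Continuous.rpow_const ?_ fun ρ => Or.inl (by positivity)
    exact continuous_const.add (continuous_id.pow 2)
  have hKmeas : Measurable K := by
    refine Measurable.mul ?_ (hsemiχ_cont.measurable.nnnorm.coe_nnreal_ennreal)
    exact ENNReal.measurable_ofReal.comp ((continuous_const.mul (hwcont (m / 2))).measurable)
  have hVmeas : Measurable V := by
    refine Measurable.nnnorm ?_ |>.coe_nnreal_ennreal
    exact ((Complex.continuous_ofReal.comp (hwcont (-(m / 2)))).mul hsemiφ_cont).measurable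
  -- pointwise bound
  have ptw : ∀ ξ : ℝ, (‖(((1 + ξ ^ 2) ^ (-(m / 2)) : ℝ) : ℂ) *
      semiFourier h (fun x => χ x * φ x) ξ‖₊ : ℝ≥0∞) ≤ ∫⁻ η, K (ξ - η) * V η := by
    intro ξ
    have hconv := semiFourier_conv hh hχsm.continuous hχc Φ ξ
    rw [hχφ] at hconv
    rw [hconv]
    calc (‖(((1 + ξ ^ 2) ^ (-(m / 2)) : ℝ) : ℂ) * (((s : ℝ) : ℂ)⁻¹ *
          ∫ η : ℝ, semiFourier h χ (ξ - η) * semiFourier h φ η)‖₊ : ℝ≥0∞)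
        = ENNReal.ofReal ((1 + ξ ^ 2) ^ (-(m / 2))) * (ENNReal.ofReal s⁻¹ *
            (‖∫ η : ℝ, semiFourier h χ (ξ - η) * semiFourier h φ η‖₊ : ℝ≥0∞)) := by
          rw [nnnorm_mul, nnnorm_mul, ENNReal.coe_mul, ENNReal.coe_mul,
            enn_ofReal (by positivity), ← Complex.ofReal_inv, enn_ofReal (by positivity)]
      _ ≤ ENNReal.ofReal ((1 + ξ ^ 2) ^ (-(m / 2))) * (ENNReal.ofReal s⁻¹ *
            ∫⁻ η, (‖semiFourier h χ (ξ - η) * semiFourier h φ η‖₊ : ℝ≥0∞)) := by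
          refine mul_le_mul_right (mul_le_mul_right ?_ _) _
          exact enorm_integral_le_lintegral_enorm _
      _ = ∫⁻ η, ENNReal.ofReal ((1 + ξ ^ 2) ^ (-(m / 2))) * ENNReal.ofReal s⁻¹ *
            (‖semiFourier h χ (ξ - η) * semiFourier h φ η‖₊ : ℝ≥0∞) := by
          rw [lintegral_const_mul' _ _
            (ENNReal.mul_ne_top ENNReal.ofReal_ne_top ENNReal.ofReal_ne_top), mul_assoc]
      _ ≤ ∫⁻ η, K (ξ - η) * V η := by
          refine lintegral_mono fun η => ?_
          rw [nnnorm_mul, ENNReal.coe_mul]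
          rw [norm_unsplit (mhalf := m) (semiFourier h φ η) η]
          have hpeetre : ENNReal.ofReal ((1 + ξ ^ 2) ^ (-(m / 2)))
              * ENNReal.ofReal ((1 + η ^ 2) ^ (m / 2))
              ≤ ENNReal.ofReal (2 ^ (m / 2) * (1 + (ξ - η) ^ 2) ^ (m / 2)) := by
            rw [← ENNReal.ofReal_mul (by positivity)]
            exact ENNReal.ofReal_le_ofReal (peetre hm ξ η)
          calc ENNReal.ofReal ((1 + ξ ^ 2) ^ (-(m / 2))) * ENNReal.ofReal s⁻¹ *
                ((‖semiFourier h χ (ξ - η)‖₊ : ℝ≥0∞) *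
                  (ENNReal.ofReal ((1 + η ^ 2) ^ (m / 2)) * V η))
              = (ENNReal.ofReal ((1 + ξ ^ 2) ^ (-(m / 2)))
                  * ENNReal.ofReal ((1 + η ^ 2) ^ (m / 2))) *
                (ENNReal.ofReal s⁻¹ * (‖semiFourier h χ (ξ - η)‖₊ : ℝ≥0∞) * V η) := by
                ring
            _ ≤ ENNReal.ofReal (2 ^ (m / 2) * (1 + (ξ - η) ^ 2) ^ (m / 2)) *
                (ENNReal.ofReal s⁻¹ * (‖semiFourier h χ (ξ - η)‖₊ : ℝ≥0∞) * V η) :=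
                mul_le_mul_left hpeetre _
            _ = K (ξ - η) * V η := by
                rw [hKdef]
                beta_reduce
                rw [ENNReal.ofReal_mul (by positivity), ENNReal.ofReal_mul (by positivity),
                  ENNReal.ofReal_mul (by positivity)]
                ring
  -- kernel mass
  have hmass : ∫⁻ ρ, K ρ ≤ ENNReal.ofReal (2 ^ (m / 2)) *
      ∫⁻ w : ℝ, ENNReal.ofReal ((1 + (2 * π * w) ^ 2) ^ (m / 2))
        * (‖FourierTransform.fourier χ w‖₊ : ℝ≥0∞) := by
    have hFmeas : Measurable fun w : ℝ => (‖FourierTransform.fourier χ w‖₊ : ℝ≥0∞) :=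
      (continuous_fourier
        (hχsm.continuous.integrable_of_hasCompactSupport hχc)).measurable.nnnorm.coe_nnreal_ennreal
    have hKrw : ∀ ρ : ℝ, K ρ = ENNReal.ofReal (2 ^ (m / 2) * s⁻¹ * s⁻¹) *
        (ENNReal.ofReal ((1 + ρ ^ 2) ^ (m / 2)) *
          (‖FourierTransform.fourier χ (ρ / (2 * π * h))‖₊ : ℝ≥0∞)) := by
      intro ρ
      rw [hKdef]
      beta_reduce
      rw [nnnorm_semiFourier hh, ← hsdef]
      rw [ENNReal.ofReal_mul (by positivity), ENNReal.ofReal_mul (by positivity),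
        ENNReal.ofReal_mul (by positivity), ENNReal.ofReal_mul (by positivity)]
      ring
    calc ∫⁻ ρ, K ρ
        = ENNReal.ofReal (2 ^ (m / 2) * s⁻¹ * s⁻¹) *
            ∫⁻ ρ, ENNReal.ofReal ((1 + ρ ^ 2) ^ (m / 2)) *
              (‖FourierTransform.fourier χ (ρ / (2 * π * h))‖₊ : ℝ≥0∞) := by
          rw [← lintegral_const_mul' _ _ ENNReal.ofReal_ne_top]
          exact lintegral_congr hKrw
      _ ≤ ENNReal.ofReal (2 ^ (m / 2) * s⁻¹ * s⁻¹) * (ENNReal.ofReal (2 * π * h) *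
            ∫⁻ w : ℝ, ENNReal.ofReal ((1 + (2 * π * w) ^ 2) ^ (m / 2))
              * (‖FourierTransform.fourier χ w‖₊ : ℝ≥0∞)) :=
          mul_le_mul_right (scaled_kernel_le hm hh hh1 _ hFmeas (m / 2) (by positivity)) _
      _ = ENNReal.ofReal (2 ^ (m / 2) * s⁻¹ * s⁻¹ * (2 * π * h)) *
            ∫⁻ w : ℝ, ENNReal.ofReal ((1 + (2 * π * w) ^ 2) ^ (m / 2))
              * (‖FourierTransform.fourier χ w‖₊ : ℝ≥0∞) := by
          rw [← mul_assoc, ← ENNReal.ofReal_mul (by positivity)]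
      _ = ENNReal.ofReal (2 ^ (m / 2)) *
            ∫⁻ w : ℝ, ENNReal.ofReal ((1 + (2 * π * w) ^ 2) ^ (m / 2))
              * (‖FourierTransform.fourier χ w‖₊ : ℝ≥0∞) := by
          congr 1
          congr 1
          rw [← hss]
          field_simp
  -- conclude via Young
  have hYoung := young hKmeas hVmeas
  rw [eLpNorm_two, eLpNorm_two]
  calc (∫⁻ ξ : ℝ, ((‖(((1 + ξ ^ 2) ^ (-(m / 2)) : ℝ) : ℂ) *
        semiFourier h (fun x => χ x * φ x) ξ‖₊ : ℝ≥0∞)) ^ (2 : ℝ)) ^ (1 / 2 : ℝ)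
      ≤ (∫⁻ ξ : ℝ, (∫⁻ η, K (ξ - η) * V η) ^ (2 : ℝ)) ^ (1 / 2 : ℝ) := by
        refine ENNReal.rpow_le_rpow (lintegral_mono fun ξ => ?_) (by norm_num)
        exact ENNReal.rpow_le_rpow (ptw ξ) (by norm_num)
    _ ≤ ((∫⁻ ρ, K ρ) ^ (2 : ℝ) * ∫⁻ η, (V η) ^ (2 : ℝ)) ^ (1 / 2 : ℝ) :=
        ENNReal.rpow_le_rpow hYoung (by norm_num)
    _ = (∫⁻ ρ, K ρ) * (∫⁻ η, (V η) ^ (2 : ℝ)) ^ (1 / 2 : ℝ) := by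
        rw [ENNReal.mul_rpow_of_nonneg _ _ (by norm_num), ← ENNReal.rpow_mul]
        norm_num
    _ ≤ (ENNReal.ofReal (2 ^ (m / 2)) *
          ∫⁻ w : ℝ, ENNReal.ofReal ((1 + (2 * π * w) ^ 2) ^ (m / 2))
            * (‖FourierTransform.fourier χ w‖₊ : ℝ≥0∞)) *
          (∫⁻ η, (V η) ^ (2 : ℝ)) ^ (1 / 2 : ℝ) := mul_le_mul_left hmass _

/-! ### Main estimate for the rank-one coefficients -/

lemma pairing_bound {m : ℝ} (hm : 0 ≤ m) {h : ℝ} (hh : 0 < h) (hh1 : h ≤ 1)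
    (G : SchwartzMap ℝ ℂ)
    (φ : ℝ → ℂ) (hφsm : ContDiff ℝ (⊤ : ℕ∞) φ) (hφc : HasCompactSupport φ) :
    (‖∫ x : ℝ, G x * φ x‖₊ : ℝ≥0∞)
      ≤ (∫⁻ w : ℝ, ENNReal.ofReal ((1 + (2 * π * w) ^ 2) ^ m)
            * ((‖FourierTransform.fourier (⇑G) w‖₊ : ℝ≥0∞)) ^ (2 : ℝ)) ^ (1 / 2 : ℝ)
        * eLpNorm (fun η : ℝ => (((1 + η ^ 2) ^ (-(m / 2)) : ℝ) : ℂ) *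
            semiFourier h φ η) 2 volume := by
  have hp : (0 : ℝ) < 2 * π * h := by positivity
  set s : ℝ := Real.sqrt (2 * π * h) with hsdef
  have hs : 0 < s := Real.sqrt_pos.2 hp
  have hss : s * s = 2 * π * h := Real.mul_self_sqrt hp.le
  set Φ : SchwartzMap ℝ ℂ := toSchwartz φ hφsm hφc with hΦdef
  have hχφ : ⇑Φ = φ := rfl
  have hFG : Continuous (FourierTransform.fourier (⇑G)) := continuous_fourier G.integrable
  have hsemiG_cont : Continuous (semiFourier h ⇑G) := continuous_semiFourier hh G
  have hsemiφ_cont : Continuous (semiFourier h φ) := continuous_semiFourier hh Φ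
  have hwcont : ∀ r : ℝ, Continuous fun ρ : ℝ => (1 + ρ ^ 2) ^ r := by
    intro r
    refine Continuous.rpow_const ?_ fun ρ => Or.inl (by positivity)
    exact continuous_const.add (continuous_id.pow 2)
  set A : ℝ → ℝ≥0∞ := fun η => ENNReal.ofReal ((1 + η ^ 2) ^ (m / 2))
      * (‖semiFourier h (⇑G) (-η)‖₊ : ℝ≥0∞) with hA
  set V : ℝ → ℝ≥0∞ := fun η =>
    (‖(((1 + η ^ 2) ^ (-(m / 2)) : ℝ) : ℂ) * semiFourier h φ η‖₊ : ℝ≥0∞) with hVdef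
  have hAmeas : Measurable A := by
    refine Measurable.mul (M := ℝ≥0∞) ?_ ?_
    · exact ENNReal.measurable_ofReal.comp (hwcont (m / 2)).measurable
    · exact (hsemiG_cont.comp continuous_neg).measurable.nnnorm.coe_nnreal_ennreal
  have hVmeas : Measurable V := by
    refine Measurable.nnnorm ?_ |>.coe_nnreal_ennreal
    exact ((Complex.continuous_ofReal.comp (hwcont (-(m / 2)))).mul hsemiφ_cont).measurable
  have hpair : ∫ x : ℝ, G x * φ x = ∫ η : ℝ, semiFourier h (⇑G) (-η) * semiFourier h φ η := by
    have := pairing_semi hh Φ G.integrable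
    rw [hχφ] at this
    exact this
  have step1 : (‖∫ x : ℝ, G x * φ x‖₊ : ℝ≥0∞) ≤ ∫⁻ η, A η * V η := by
    rw [hpair]
    refine (enorm_integral_le_lintegral_enorm _).trans (lintegral_mono fun η => ?_)
    rw [enorm_eq_nnnorm, nnnorm_mul, ENNReal.coe_mul]
    rw [norm_unsplit (mhalf := m) (semiFourier h φ η) η]
    rw [hA]
    beta_reduce
    exact le_of_eq (by ring)
  have step2 : ∫⁻ η, A η * V η
      ≤ (∫⁻ η, (A η) ^ (2 : ℝ)) ^ (1 / 2 : ℝ) * (∫⁻ η, (V η) ^ (2 : ℝ)) ^ (1 / 2 : ℝ) :=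
    lintegral_CS hAmeas.aemeasurable hVmeas.aemeasurable
  -- compute/bound ∫ A²
  have hA2 : ∫⁻ η, (A η) ^ (2 : ℝ)
      ≤ ∫⁻ w : ℝ, ENNReal.ofReal ((1 + (2 * π * w) ^ 2) ^ m)
          * ((‖FourierTransform.fourier (⇑G) w‖₊ : ℝ≥0∞)) ^ (2 : ℝ) := by
    have hA2eq : ∀ η : ℝ, (A η) ^ (2 : ℝ)
        = ENNReal.ofReal ((1 + η ^ 2) ^ m) * ((‖semiFourier h (⇑G) (-η)‖₊ : ℝ≥0∞)) ^ (2 : ℝ) := by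
      intro η
      rw [hA]
      beta_reduce
      rw [ENNReal.mul_rpow_of_nonneg _ _ (by norm_num)]
      congr 1
      rw [enn_sq (by positivity)]
      congr 1
      rw [← Real.rpow_add (by positivity : (0:ℝ) < 1 + η ^ 2)]
      congr 1
      ring
    rw [lintegral_congr hA2eq]
    have hnegmeas : Measurable fun η : ℝ => ENNReal.ofReal ((1 + η ^ 2) ^ m)
        * ((‖semiFourier h (⇑G) η‖₊ : ℝ≥0∞)) ^ (2 : ℝ) := by
      refine Measurable.mul ?_ ?_
      · exact ENNReal.measurable_ofReal.comp (hwcont m).measurable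
      · exact (hsemiG_cont.measurable.nnnorm.coe_nnreal_ennreal).pow_const _
    have hneg : ∫⁻ η : ℝ, ENNReal.ofReal ((1 + η ^ 2) ^ m)
        * ((‖semiFourier h (⇑G) (-η)‖₊ : ℝ≥0∞)) ^ (2 : ℝ)
        = ∫⁻ η : ℝ, ENNReal.ofReal ((1 + η ^ 2) ^ m)
            * ((‖semiFourier h (⇑G) η‖₊ : ℝ≥0∞)) ^ (2 : ℝ) := by
      have := lintegral_comp_neg' (fun η : ℝ => ENNReal.ofReal ((1 + η ^ 2) ^ m)
        * ((‖semiFourier h (⇑G) η‖₊ : ℝ≥0∞)) ^ (2 : ℝ)) hnegmeas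
      rw [← this]
      refine lintegral_congr fun η => ?_
      beta_reduce
      rw [neg_sq]
    rw [hneg]
    -- rewrite via fourier integral and rescale
    have hGrw : ∀ η : ℝ, ENNReal.ofReal ((1 + η ^ 2) ^ m)
        * ((‖semiFourier h (⇑G) η‖₊ : ℝ≥0∞)) ^ (2 : ℝ)
        = ENNReal.ofReal (s⁻¹ * s⁻¹) * (ENNReal.ofReal ((1 + η ^ 2) ^ m)
            * ((‖FourierTransform.fourier (⇑G) (η / (2 * π * h))‖₊ : ℝ≥0∞)) ^ (2 : ℝ)) := by
      intro η
      rw [nnnorm_semiFourier hh, ← hsdef]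
      rw [ENNReal.mul_rpow_of_nonneg _ _ (by norm_num)]
      rw [enn_sq (by positivity)]
      ring
    rw [lintegral_congr hGrw]
    have hFmeas2 : Measurable fun w : ℝ => ((‖FourierTransform.fourier (⇑G) w‖₊ : ℝ≥0∞)) ^ (2 : ℝ) :=
      (hFG.measurable.nnnorm.coe_nnreal_ennreal).pow_const _
    rw [lintegral_const_mul' _ _ ENNReal.ofReal_ne_top]
    calc ENNReal.ofReal (s⁻¹ * s⁻¹) * ∫⁻ η : ℝ, ENNReal.ofReal ((1 + η ^ 2) ^ m)
          * ((‖FourierTransform.fourier (⇑G) (η / (2 * π * h))‖₊ : ℝ≥0∞)) ^ (2 : ℝ)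
        ≤ ENNReal.ofReal (s⁻¹ * s⁻¹) * (ENNReal.ofReal (2 * π * h) *
            ∫⁻ w : ℝ, ENNReal.ofReal ((1 + (2 * π * w) ^ 2) ^ m)
              * ((‖FourierTransform.fourier (⇑G) w‖₊ : ℝ≥0∞)) ^ (2 : ℝ)) :=
          mul_le_mul_right (scaled_kernel_le hm hh hh1 _ hFmeas2 m hm) _
      _ = ENNReal.ofReal (s⁻¹ * s⁻¹ * (2 * π * h)) *
            ∫⁻ w : ℝ, ENNReal.ofReal ((1 + (2 * π * w) ^ 2) ^ m)
              * ((‖FourierTransform.fourier (⇑G) w‖₊ : ℝ≥0∞)) ^ (2 : ℝ) := by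
          rw [← mul_assoc, ← ENNReal.ofReal_mul (by positivity)]
      _ = ∫⁻ w : ℝ, ENNReal.ofReal ((1 + (2 * π * w) ^ 2) ^ m)
              * ((‖FourierTransform.fourier (⇑G) w‖₊ : ℝ≥0∞)) ^ (2 : ℝ) := by
          rw [show s⁻¹ * s⁻¹ * (2 * π * h) = 1 by rw [← hss]; field_simp]
          simp
  calc (‖∫ x : ℝ, G x * φ x‖₊ : ℝ≥0∞)
      ≤ ∫⁻ η, A η * V η := step1
    _ ≤ (∫⁻ η, (A η) ^ (2 : ℝ)) ^ (1 / 2 : ℝ) * (∫⁻ η, (V η) ^ (2 : ℝ)) ^ (1 / 2 : ℝ) := step2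
    _ ≤ (∫⁻ w : ℝ, ENNReal.ofReal ((1 + (2 * π * w) ^ 2) ^ m)
          * ((‖FourierTransform.fourier (⇑G) w‖₊ : ℝ≥0∞)) ^ (2 : ℝ)) ^ (1 / 2 : ℝ)
          * (∫⁻ η, (V η) ^ (2 : ℝ)) ^ (1 / 2 : ℝ) :=
        mul_le_mul_left (ENNReal.rpow_le_rpow hA2 (by norm_num)) _
    _ = (∫⁻ w : ℝ, ENNReal.ofReal ((1 + (2 * π * w) ^ 2) ^ m)
          * ((‖FourierTransform.fourier (⇑G) w‖₊ : ℝ≥0∞)) ^ (2 : ℝ)) ^ (1 / 2 : ℝ)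
          * eLpNorm (fun η : ℝ => (((1 + η ^ 2) ^ (-(m / 2)) : ℝ) : ℂ) *
              semiFourier h φ η) 2 volume := by
        rw [eLpNorm_two]

/-! ### The weighted norm of the monomial -/

lemma normB {m : ℝ} (hm : 0 ≤ m) (k : ℕ) :
    eLpNorm (fun ξ : ℝ => (((1 + ξ ^ 2) ^ (-(m / 2)) : ℝ) : ℂ) * (ξ : ℂ) ^ k) 2 volume
      ≤ (∫⁻ ξ : ℝ, ENNReal.ofReal ((1 + ξ ^ 2) ^ ((k : ℝ) - m))) ^ (1 / 2 : ℝ) := by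
  rw [eLpNorm_two]
  refine ENNReal.rpow_le_rpow (lintegral_mono fun ξ => ?_) (by norm_num)
  have hb : (0 : ℝ) < 1 + ξ ^ 2 := by positivity
  have h1 : ‖(((1 + ξ ^ 2) ^ (-(m / 2)) : ℝ) : ℂ) * (ξ : ℂ) ^ k‖
      = (1 + ξ ^ 2) ^ (-(m / 2)) * |ξ| ^ k := by
    rw [norm_mul, norm_pow, Complex.norm_real, Complex.norm_real, Real.norm_eq_abs,
      Real.norm_eq_abs, _root_.abs_of_nonneg (by positivity : (0:ℝ) ≤ (1 + ξ ^ 2) ^ (-(m / 2)))]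
  rw [← ofReal_norm_eq_coe_nnnorm, enn_sq (norm_nonneg _), h1]
  refine ENNReal.ofReal_le_ofReal ?_
  have hsq : ((1 + ξ ^ 2) ^ (-(m / 2)) * |ξ| ^ k) * ((1 + ξ ^ 2) ^ (-(m / 2)) * |ξ| ^ k)
      = (1 + ξ ^ 2) ^ (-m) * (ξ ^ 2) ^ k := by
    have e1 : (1 + ξ ^ 2) ^ (-(m / 2)) * (1 + ξ ^ 2) ^ (-(m / 2)) = (1 + ξ ^ 2) ^ (-m) := by
      rw [← Real.rpow_add hb]
      congr 1
      ring
    have e2 : (|ξ| ^ k) * (|ξ| ^ k) = (ξ ^ 2) ^ k := by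
      rw [← pow_add, ← _root_.sq_abs ξ, ← pow_mul]
      congr 1
      ring
    calc ((1 + ξ ^ 2) ^ (-(m / 2)) * |ξ| ^ k) * ((1 + ξ ^ 2) ^ (-(m / 2)) * |ξ| ^ k)
        = ((1 + ξ ^ 2) ^ (-(m / 2)) * (1 + ξ ^ 2) ^ (-(m / 2))) * ((|ξ| ^ k) * (|ξ| ^ k)) := by
          ring
      _ = (1 + ξ ^ 2) ^ (-m) * (ξ ^ 2) ^ k := by rw [e1, e2]
  rw [hsq]
  have hmono : (ξ ^ 2) ^ k ≤ (1 + ξ ^ 2) ^ k :=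
    pow_le_pow_left₀ (sq_nonneg ξ) (by linarith) k
  calc (1 + ξ ^ 2) ^ (-m) * (ξ ^ 2) ^ k
      ≤ (1 + ξ ^ 2) ^ (-m) * (1 + ξ ^ 2) ^ k :=
        mul_le_mul_of_nonneg_left hmono (by positivity)
    _ = (1 + ξ ^ 2) ^ ((k : ℝ) - m) := by
        rw [← Real.rpow_natCast (1 + ξ ^ 2) k, ← Real.rpow_add hb]
        congr 1
        ring

end TaylorAux

/-- **Operator norm of the Taylor projection remainder** (Lemma 6.5). -/
theorem taylor_projection_remainder_bound (m : ℝ) (hm : 0 ≤ m) (d : ℕ)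
    (hd : (d : ℝ) < m - 1 / 2)
    (χ₀ : ℝ → ℝ) (hχsm : ContDiff ℝ (⊤ : ℕ∞) χ₀) (hχc : HasCompactSupport χ₀) :
    ∃ C : ℝ, 0 < C ∧ ∀ h : ℝ, 0 < h → h ≤ 1 →
      ∀ φ : ℝ → ℂ, ContDiff ℝ (⊤ : ℕ∞) φ → HasCompactSupport φ →
        eLpNorm
          (fun ξ : ℝ => (((1 + ξ ^ 2) ^ (-(m / 2)) : ℝ) : ℂ) *
            (semiFourier h (fun x => (χ₀ x : ℂ) * φ x) ξ -
              ∑ k ∈ Finset.range (d + 1), PiFT χ₀ φ k h ξ)) 2 volume ≤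
        ENNReal.ofReal (C * h ^ (-(d : ℝ) - 1 / 2)) * sobolevNorm h m φ := by
  classical
  have hχsm' : ContDiff ℝ (⊤ : ℕ∞) (fun x : ℝ => ((χ₀ x : ℂ))) :=
    Complex.ofRealCLM.contDiff.comp hχsm
  have hχc' : HasCompactSupport (fun x : ℝ => ((χ₀ x : ℂ))) :=
    hχc.comp_left (g := Complex.ofReal) Complex.ofReal_zero
  have hGsm : ∀ k : ℕ, ContDiff ℝ (⊤ : ℕ∞) (fun x : ℝ => (x : ℂ) ^ k * (χ₀ x : ℂ)) :=
    fun k => (Complex.ofRealCLM.contDiff.pow k).mul hχsm'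
  have hGc : ∀ k : ℕ, HasCompactSupport (fun x : ℝ => (x : ℂ) ^ k * (χ₀ x : ℂ)) := by
    intro k
    apply HasCompactSupport.mono hχc'
    intro x hx
    simp only [Function.mem_support] at hx ⊢
    intro h0
    exact hx (by rw [h0, mul_zero])
  set G : ℕ → SchwartzMap ℝ ℂ := fun k => TaylorAux.toSchwartz _ (hGsm k) (hGc k) with hGdef
  -- finiteness of the constants
  have hMfin : (∫⁻ w : ℝ, ENNReal.ofReal ((1 + (2 * Real.pi * w) ^ 2) ^ (m / 2))
      * (‖FourierTransform.fourier (fun x : ℝ => ((χ₀ x : ℂ))) w‖₊ : ℝ≥0∞)) ≠ ⊤ := by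
    have := TaylorAux.weighted_fin
      (SchwartzMap.fourierTransformCLM ℂ (TaylorAux.toSchwartz _ hχsm' hχc'))
      (r := m / 2) (by linarith)
    simpa [SchwartzMap.fourierTransformCLM_apply, SchwartzMap.fourier_coe, TaylorAux.toSchwartz_coe] using this
  have hNfin : ∀ k : ℕ, (∫⁻ w : ℝ, ENNReal.ofReal ((1 + (2 * Real.pi * w) ^ 2) ^ m)
      * ((‖FourierTransform.fourier (⇑(G k)) w‖₊ : ℝ≥0∞)) ^ (2 : ℝ)) ≠ ⊤ := by
    intro k
    have := TaylorAux.weighted_fin2 (SchwartzMap.fourierTransformCLM ℂ (G k)) (r := m) hm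
    simpa [SchwartzMap.fourierTransformCLM_apply, SchwartzMap.fourier_coe] using this
  have hJfin : ∀ k : ℕ, k ≤ d →
      (∫⁻ ξ : ℝ, ENNReal.ofReal ((1 + ξ ^ 2) ^ ((k : ℝ) - m))) ≠ ⊤ := by
    intro k hkd
    refine TaylorAux.Jfin ?_
    have : (k : ℝ) ≤ (d : ℝ) := by exact_mod_cast hkd
    linarith
  set E₀ : ℝ≥0∞ := ENNReal.ofReal (2 ^ (m / 2)) *
      (∫⁻ w : ℝ, ENNReal.ofReal ((1 + (2 * Real.pi * w) ^ 2) ^ (m / 2))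
        * (‖FourierTransform.fourier (fun x : ℝ => ((χ₀ x : ℂ))) w‖₊ : ℝ≥0∞))
    + ∑ k ∈ Finset.range (d + 1),
        ENNReal.ofReal (((k.factorial : ℝ))⁻¹ * (Real.sqrt (2 * Real.pi))⁻¹)
          * (∫⁻ w : ℝ, ENNReal.ofReal ((1 + (2 * Real.pi * w) ^ 2) ^ m)
              * ((‖FourierTransform.fourier (⇑(G k)) w‖₊ : ℝ≥0∞)) ^ (2 : ℝ)) ^ (1 / 2 : ℝ)
          * (∫⁻ ξ : ℝ, ENNReal.ofReal ((1 + ξ ^ 2) ^ ((k : ℝ) - m))) ^ (1 / 2 : ℝ) with hE₀def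
  have hE₀fin : E₀ ≠ ⊤ := by
    rw [hE₀def]
    refine ENNReal.add_ne_top.2 ⟨ENNReal.mul_ne_top ENNReal.ofReal_ne_top hMfin, ?_⟩
    refine ne_of_lt (ENNReal.sum_lt_top.2 fun k hk => ?_)
    have hk' : k ≤ d := Nat.lt_succ_iff.1 (Finset.mem_range.1 hk)
    refine ENNReal.mul_lt_top (ENNReal.mul_lt_top ENNReal.ofReal_lt_top ?_) ?_
    · exact ENNReal.rpow_lt_top_of_nonneg (by norm_num) (hNfin k)
    · exact ENNReal.rpow_lt_top_of_nonneg (by norm_num) (hJfin k hk')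
  refine ⟨E₀.toReal + 1, by positivity, ?_⟩
  intro h hh hh1 φ hφsm hφc
  have hp : (0 : ℝ) < 2 * Real.pi * h := by positivity
  have hs : (0 : ℝ) < Real.sqrt (2 * Real.pi * h) := Real.sqrt_pos.2 hp
  have hd' : -(d : ℝ) - 1 / 2 ≤ 0 := by
    have : (0 : ℝ) ≤ (d : ℝ) := Nat.cast_nonneg d
    linarith
  have hone_le : (1 : ℝ≥0∞) ≤ ENNReal.ofReal (h ^ (-(d : ℝ) - 1 / 2)) := by
    rw [← ENNReal.ofReal_one]
    exact ENNReal.ofReal_le_ofReal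
      (Real.one_le_rpow_of_pos_of_le_one_of_nonpos hh hh1 hd')
  set S : ℝ≥0∞ := sobolevNorm h m φ with hSdef
  -- Piece A
  have pieceA : eLpNorm (fun ξ : ℝ => (((1 + ξ ^ 2) ^ (-(m / 2)) : ℝ) : ℂ) *
      semiFourier h (fun x => (χ₀ x : ℂ) * φ x) ξ) 2 volume
      ≤ ENNReal.ofReal (2 ^ (m / 2)) *
          (∫⁻ w : ℝ, ENNReal.ofReal ((1 + (2 * Real.pi * w) ^ 2) ^ (m / 2))
            * (‖FourierTransform.fourier (fun x : ℝ => ((χ₀ x : ℂ))) w‖₊ : ℝ≥0∞)) * S :=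
    TaylorAux.mainA hm hh hh1 hχsm' hχc' φ hφsm hφc
  -- Piece B
  have pieceB : ∀ k : ℕ, k ≤ d →
      eLpNorm (fun ξ : ℝ => (((1 + ξ ^ 2) ^ (-(m / 2)) : ℝ) : ℂ) * PiFT χ₀ φ k h ξ) 2 volume
        ≤ ENNReal.ofReal (((k.factorial : ℝ))⁻¹ * (Real.sqrt (2 * Real.pi))⁻¹)
            * (∫⁻ w : ℝ, ENNReal.ofReal ((1 + (2 * Real.pi * w) ^ 2) ^ m)
                * ((‖FourierTransform.fourier (⇑(G k)) w‖₊ : ℝ≥0∞)) ^ (2 : ℝ)) ^ (1 / 2 : ℝ)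
            * (∫⁻ ξ : ℝ, ENNReal.ofReal ((1 + ξ ^ 2) ^ ((k : ℝ) - m))) ^ (1 / 2 : ℝ)
            * ENNReal.ofReal (h ^ (-(d : ℝ) - 1 / 2)) * S := by
    intro k hkd
    set a : ℂ := ((k.factorial : ℂ))⁻¹ * (∫ x : ℝ, (x : ℂ) ^ k * (χ₀ x : ℂ) * φ x) *
        ((Real.sqrt (2 * Real.pi * h) : ℝ) : ℂ)⁻¹ * (-(Complex.I) / h) ^ k with hadef
    have hfun : (fun ξ : ℝ => (((1 + ξ ^ 2) ^ (-(m / 2)) : ℝ) : ℂ) * PiFT χ₀ φ k h ξ)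
        = a • fun ξ : ℝ => (((1 + ξ ^ 2) ^ (-(m / 2)) : ℝ) : ℂ) * (ξ : ℂ) ^ k := by
      funext ξ
      simp only [Pi.smul_apply, smul_eq_mul, PiFT, hadef]
      have hpow : (-(Complex.I) * (ξ : ℂ) / (h : ℂ)) ^ k
          = (-(Complex.I) / h) ^ k * (ξ : ℂ) ^ k := by
        rw [show -(Complex.I) * (ξ : ℂ) / (h : ℂ) = (-(Complex.I) / (h : ℂ)) * (ξ : ℂ) by ring,
          mul_pow]
      rw [hpow]
      ring
    rw [hfun, eLpNorm_const_smul]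
    have hnorm : ‖a‖ = (k.factorial : ℝ)⁻¹ * ‖∫ x : ℝ, (x : ℂ) ^ k * (χ₀ x : ℂ) * φ x‖ *
        (Real.sqrt (2 * Real.pi * h))⁻¹ * (h⁻¹) ^ k := by
      simp only [hadef, norm_mul, norm_pow, norm_inv, norm_div, norm_neg, Complex.norm_I,
        Complex.norm_natCast, Complex.norm_real, Real.norm_eq_abs, one_div]
      rw [_root_.abs_of_nonneg hs.le, _root_.abs_of_nonneg hh.le]
    have hcoef : (‖∫ x : ℝ, (x : ℂ) ^ k * (χ₀ x : ℂ) * φ x‖₊ : ℝ≥0∞)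
        ≤ (∫⁻ w : ℝ, ENNReal.ofReal ((1 + (2 * Real.pi * w) ^ 2) ^ m)
            * ((‖FourierTransform.fourier (⇑(G k)) w‖₊ : ℝ≥0∞)) ^ (2 : ℝ)) ^ (1 / 2 : ℝ) * S :=
      TaylorAux.pairing_bound hm hh hh1 (G k) φ hφsm hφc
    have hsplit : ENNReal.ofReal ((Real.sqrt (2 * Real.pi * h))⁻¹)
          * ENNReal.ofReal ((h⁻¹) ^ k)
        = ENNReal.ofReal ((Real.sqrt (2 * Real.pi))⁻¹)
            * ENNReal.ofReal (h ^ (-(k : ℝ) - 1 / 2)) := by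
      rw [← ENNReal.ofReal_mul (by positivity), ← ENNReal.ofReal_mul (by positivity)]
      congr 1
      rw [show (2 * Real.pi * h) = (2 * Real.pi) * h by ring,
        Real.sqrt_mul (by positivity) h, mul_inv, mul_assoc]
      congr 1
      rw [Real.sqrt_eq_rpow, ← Real.rpow_neg_one h,
        ← Real.rpow_natCast (h ^ (-1 : ℝ)) k, ← Real.rpow_mul hh.le,
        ← Real.rpow_neg hh.le, ← Real.rpow_add hh]
      congr 1
      ring
    have hmono : ENNReal.ofReal (h ^ (-(k : ℝ) - 1 / 2))
        ≤ ENNReal.ofReal (h ^ (-(d : ℝ) - 1 / 2)) := by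
      refine ENNReal.ofReal_le_ofReal (Real.rpow_le_rpow_of_exponent_ge hh hh1 ?_)
      have : (k : ℝ) ≤ (d : ℝ) := by exact_mod_cast hkd
      linarith
    have key : (‖a‖₊ : ℝ≥0∞)
        ≤ ENNReal.ofReal (((k.factorial : ℝ))⁻¹ * (Real.sqrt (2 * Real.pi))⁻¹)
            * ((∫⁻ w : ℝ, ENNReal.ofReal ((1 + (2 * Real.pi * w) ^ 2) ^ m)
                * ((‖FourierTransform.fourier (⇑(G k)) w‖₊ : ℝ≥0∞)) ^ (2 : ℝ)) ^ (1 / 2 : ℝ) * S)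
            * ENNReal.ofReal (h ^ (-(d : ℝ) - 1 / 2)) := by
      calc (‖a‖₊ : ℝ≥0∞) = ENNReal.ofReal ‖a‖ := (ofReal_norm_eq_coe_nnnorm a).symm
        _ = ENNReal.ofReal ((k.factorial : ℝ)⁻¹)
              * ENNReal.ofReal ‖∫ x : ℝ, (x : ℂ) ^ k * (χ₀ x : ℂ) * φ x‖
              * ENNReal.ofReal ((Real.sqrt (2 * Real.pi * h))⁻¹)
              * ENNReal.ofReal ((h⁻¹) ^ k) := by
            rw [hnorm, ENNReal.ofReal_mul (by positivity), ENNReal.ofReal_mul (by positivity),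
              ENNReal.ofReal_mul (by positivity)]
        _ = ENNReal.ofReal ((k.factorial : ℝ)⁻¹)
              * ENNReal.ofReal ‖∫ x : ℝ, (x : ℂ) ^ k * (χ₀ x : ℂ) * φ x‖
              * (ENNReal.ofReal ((Real.sqrt (2 * Real.pi))⁻¹)
                * ENNReal.ofReal (h ^ (-(k : ℝ) - 1 / 2))) := by
            rw [mul_assoc, hsplit]
        _ ≤ ENNReal.ofReal ((k.factorial : ℝ)⁻¹)
              * ((∫⁻ w : ℝ, ENNReal.ofReal ((1 + (2 * Real.pi * w) ^ 2) ^ m)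
                  * ((‖FourierTransform.fourier (⇑(G k)) w‖₊ : ℝ≥0∞)) ^ (2 : ℝ)) ^ (1 / 2 : ℝ) * S)
              * (ENNReal.ofReal ((Real.sqrt (2 * Real.pi))⁻¹)
                * ENNReal.ofReal (h ^ (-(d : ℝ) - 1 / 2))) := by
            refine mul_le_mul' (mul_le_mul' le_rfl ?_) (mul_le_mul' le_rfl hmono)
            rw [ofReal_norm_eq_coe_nnnorm]
            exact hcoef
        _ = ENNReal.ofReal (((k.factorial : ℝ))⁻¹ * (Real.sqrt (2 * Real.pi))⁻¹)
              * ((∫⁻ w : ℝ, ENNReal.ofReal ((1 + (2 * Real.pi * w) ^ 2) ^ m)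
                  * ((‖FourierTransform.fourier (⇑(G k)) w‖₊ : ℝ≥0∞)) ^ (2 : ℝ)) ^ (1 / 2 : ℝ) * S)
              * ENNReal.ofReal (h ^ (-(d : ℝ) - 1 / 2)) := by
            rw [ENNReal.ofReal_mul (by positivity)]
            ring
    calc (‖a‖₊ : ℝ≥0∞) * eLpNorm
          (fun ξ : ℝ => (((1 + ξ ^ 2) ^ (-(m / 2)) : ℝ) : ℂ) * (ξ : ℂ) ^ k) 2 volume
        ≤ (ENNReal.ofReal (((k.factorial : ℝ))⁻¹ * (Real.sqrt (2 * Real.pi))⁻¹)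
            * ((∫⁻ w : ℝ, ENNReal.ofReal ((1 + (2 * Real.pi * w) ^ 2) ^ m)
                * ((‖FourierTransform.fourier (⇑(G k)) w‖₊ : ℝ≥0∞)) ^ (2 : ℝ)) ^ (1 / 2 : ℝ) * S)
            * ENNReal.ofReal (h ^ (-(d : ℝ) - 1 / 2)))
            * (∫⁻ ξ : ℝ, ENNReal.ofReal ((1 + ξ ^ 2) ^ ((k : ℝ) - m))) ^ (1 / 2 : ℝ) :=
          mul_le_mul' key (TaylorAux.normB hm k)
      _ = ENNReal.ofReal (((k.factorial : ℝ))⁻¹ * (Real.sqrt (2 * Real.pi))⁻¹)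
            * (∫⁻ w : ℝ, ENNReal.ofReal ((1 + (2 * Real.pi * w) ^ 2) ^ m)
                * ((‖FourierTransform.fourier (⇑(G k)) w‖₊ : ℝ≥0∞)) ^ (2 : ℝ)) ^ (1 / 2 : ℝ)
            * (∫⁻ ξ : ℝ, ENNReal.ofReal ((1 + ξ ^ 2) ^ ((k : ℝ) - m))) ^ (1 / 2 : ℝ)
            * ENNReal.ofReal (h ^ (-(d : ℝ) - 1 / 2)) * S := by ring
  -- measurability facts
  have hWcont : Continuous fun ξ : ℝ => (((1 + ξ ^ 2) ^ (-(m / 2)) : ℝ) : ℂ) :=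
    Complex.continuous_ofReal.comp
      (Continuous.rpow_const (continuous_const.add (continuous_id.pow 2))
        fun ξ => Or.inl (by positivity))
  have hSFcont : Continuous (semiFourier h (fun x => (χ₀ x : ℂ) * φ x)) := by
    have hsm : ContDiff ℝ (⊤ : ℕ∞) (fun x : ℝ => (χ₀ x : ℂ) * φ x) := hχsm'.mul hφsm
    have hcs : HasCompactSupport (fun x : ℝ => (χ₀ x : ℂ) * φ x) := by
      apply HasCompactSupport.mono hφc
      intro x hx
      simp only [Function.mem_support] at hx ⊢
      intro h0
      exact hx (by rw [h0, mul_zero])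
    exact TaylorAux.continuous_semiFourier hh (TaylorAux.toSchwartz _ hsm hcs)
  have hPcont : ∀ k : ℕ,
      Continuous fun ξ : ℝ => (((1 + ξ ^ 2) ^ (-(m / 2)) : ℝ) : ℂ) * PiFT χ₀ φ k h ξ := by
    intro k
    refine hWcont.mul ?_
    exact continuous_const.mul
      (((continuous_const.mul Complex.continuous_ofReal).div_const _).pow k)
  -- split the function
  have hsplitfun : (fun ξ : ℝ => (((1 + ξ ^ 2) ^ (-(m / 2)) : ℝ) : ℂ) *
      (semiFourier h (fun x => (χ₀ x : ℂ) * φ x) ξ -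
        ∑ k ∈ Finset.range (d + 1), PiFT χ₀ φ k h ξ))
      = (fun ξ : ℝ => (((1 + ξ ^ 2) ^ (-(m / 2)) : ℝ) : ℂ) *
          semiFourier h (fun x => (χ₀ x : ℂ) * φ x) ξ)
        - ∑ k ∈ Finset.range (d + 1),
            (fun ξ : ℝ => (((1 + ξ ^ 2) ^ (-(m / 2)) : ℝ) : ℂ) * PiFT χ₀ φ k h ξ) := by
    funext ξ
    simp only [Pi.sub_apply, Finset.sum_apply]
    rw [mul_sub, Finset.mul_sum]
  rw [hsplitfun]
  have hsumeq : (∑ k ∈ Finset.range (d + 1),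
      (fun ξ : ℝ => (((1 + ξ ^ 2) ^ (-(m / 2)) : ℝ) : ℂ) * PiFT χ₀ φ k h ξ))
      = fun ξ : ℝ => ∑ k ∈ Finset.range (d + 1),
          (((1 + ξ ^ 2) ^ (-(m / 2)) : ℝ) : ℂ) * PiFT χ₀ φ k h ξ := by
    funext ξ
    simp [Finset.sum_apply]
  have hmeas1 : AEStronglyMeasurable (fun ξ : ℝ => (((1 + ξ ^ 2) ^ (-(m / 2)) : ℝ) : ℂ) *
      semiFourier h (fun x => (χ₀ x : ℂ) * φ x) ξ) volume :=
    (hWcont.mul hSFcont).aestronglyMeasurable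
  have hmeas2 : AEStronglyMeasurable (∑ k ∈ Finset.range (d + 1),
      (fun ξ : ℝ => (((1 + ξ ^ 2) ^ (-(m / 2)) : ℝ) : ℂ) * PiFT χ₀ φ k h ξ)) volume := by
    rw [hsumeq]
    exact (continuous_finset_sum _ fun k _ => hPcont k).aestronglyMeasurable
  refine le_trans (eLpNorm_sub_le hmeas1 hmeas2 one_le_two) ?_
  have hsumle : eLpNorm (∑ k ∈ Finset.range (d + 1),
      (fun ξ : ℝ => (((1 + ξ ^ 2) ^ (-(m / 2)) : ℝ) : ℂ) * PiFT χ₀ φ k h ξ)) 2 volume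
      ≤ ∑ k ∈ Finset.range (d + 1), eLpNorm
          (fun ξ : ℝ => (((1 + ξ ^ 2) ^ (-(m / 2)) : ℝ) : ℂ) * PiFT χ₀ φ k h ξ) 2 volume :=
    eLpNorm_sum_le (fun k _ => (hPcont k).aestronglyMeasurable) one_le_two
  have pieceA' : eLpNorm (fun ξ : ℝ => (((1 + ξ ^ 2) ^ (-(m / 2)) : ℝ) : ℂ) *
      semiFourier h (fun x => (χ₀ x : ℂ) * φ x) ξ) 2 volume
      ≤ ENNReal.ofReal (2 ^ (m / 2)) *
          (∫⁻ w : ℝ, ENNReal.ofReal ((1 + (2 * Real.pi * w) ^ 2) ^ (m / 2))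
            * (‖FourierTransform.fourier (fun x : ℝ => ((χ₀ x : ℂ))) w‖₊ : ℝ≥0∞))
          * ENNReal.ofReal (h ^ (-(d : ℝ) - 1 / 2)) * S := by
    refine pieceA.trans ?_
    refine mul_le_mul_left ?_ S
    calc ENNReal.ofReal (2 ^ (m / 2)) *
        (∫⁻ w : ℝ, ENNReal.ofReal ((1 + (2 * Real.pi * w) ^ 2) ^ (m / 2))
          * (‖FourierTransform.fourier (fun x : ℝ => ((χ₀ x : ℂ))) w‖₊ : ℝ≥0∞))
        = ENNReal.ofReal (2 ^ (m / 2)) *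
            (∫⁻ w : ℝ, ENNReal.ofReal ((1 + (2 * Real.pi * w) ^ 2) ^ (m / 2))
              * (‖FourierTransform.fourier (fun x : ℝ => ((χ₀ x : ℂ))) w‖₊ : ℝ≥0∞)) * 1 :=
          (mul_one _).symm
      _ ≤ _ := mul_le_mul_right hone_le _
  calc eLpNorm (fun ξ : ℝ => (((1 + ξ ^ 2) ^ (-(m / 2)) : ℝ) : ℂ) *
        semiFourier h (fun x => (χ₀ x : ℂ) * φ x) ξ) 2 volume
      + eLpNorm (∑ k ∈ Finset.range (d + 1),
          (fun ξ : ℝ => (((1 + ξ ^ 2) ^ (-(m / 2)) : ℝ) : ℂ) * PiFT χ₀ φ k h ξ)) 2 volume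
      ≤ (ENNReal.ofReal (2 ^ (m / 2)) *
          (∫⁻ w : ℝ, ENNReal.ofReal ((1 + (2 * Real.pi * w) ^ 2) ^ (m / 2))
            * (‖FourierTransform.fourier (fun x : ℝ => ((χ₀ x : ℂ))) w‖₊ : ℝ≥0∞))
          * ENNReal.ofReal (h ^ (-(d : ℝ) - 1 / 2)) * S)
        + ∑ k ∈ Finset.range (d + 1),
            (ENNReal.ofReal (((k.factorial : ℝ))⁻¹ * (Real.sqrt (2 * Real.pi))⁻¹)
              * (∫⁻ w : ℝ, ENNReal.ofReal ((1 + (2 * Real.pi * w) ^ 2) ^ m)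
                  * ((‖FourierTransform.fourier (⇑(G k)) w‖₊ : ℝ≥0∞)) ^ (2 : ℝ)) ^ (1 / 2 : ℝ)
              * (∫⁻ ξ : ℝ, ENNReal.ofReal ((1 + ξ ^ 2) ^ ((k : ℝ) - m))) ^ (1 / 2 : ℝ)
              * ENNReal.ofReal (h ^ (-(d : ℝ) - 1 / 2)) * S) := by
        refine add_le_add pieceA' (hsumle.trans (Finset.sum_le_sum fun k hk => ?_))
        exact pieceB k (Nat.lt_succ_iff.1 (Finset.mem_range.1 hk))
    _ = E₀ * ENNReal.ofReal (h ^ (-(d : ℝ) - 1 / 2)) * S := by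
        rw [hE₀def, add_mul, add_mul, Finset.sum_mul, Finset.sum_mul]
    _ ≤ ENNReal.ofReal (E₀.toReal + 1) * ENNReal.ofReal (h ^ (-(d : ℝ) - 1 / 2)) * S := by
        refine mul_le_mul_left (mul_le_mul_left ?_ _) _
        calc E₀ = ENNReal.ofReal E₀.toReal := (ENNReal.ofReal_toReal hE₀fin).symm
          _ ≤ ENNReal.ofReal (E₀.toReal + 1) := ENNReal.ofReal_le_ofReal (by linarith)
    _ = ENNReal.ofReal ((E₀.toReal + 1) * h ^ (-(d : ℝ) - 1 / 2)) * S := by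
        rw [ENNReal.ofReal_mul (by positivity)]
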